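/- Let P(u,v) = (k₁·u^{β₁+β₂} + 2k₂·u^{β₁}·v^{β₂} + k₃·v^{β₁+β₂})^{δ/(β₁+β₂)} be a 2-input Kadiyala production function with parameters satisfying (★★), and assume additionally that k₂ = 0 (so k₁ > 0 and k₃ > 0) and δ ≠ 1. Then the Gaussian curvature of the graph surface {(u,v,P(u,v)) : u>0, v>0} vanishes at every point of (0,∞)² if and only if β₁ + β₂ = 1. -/

import Mathlib

open Real

/-- Partial derivative in the first variable. -/
noncomputable def pdu (f : ℝ → ℝ → ℝ) : ℝ → ℝ → ℝ := fun u v => deriv (fun x => f x v) u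

/-- Partial derivative in the second variable. -/
noncomputable def pdv (f : ℝ → ℝ → ℝ) : ℝ → ℝ → ℝ := fun u v => deriv (fun y => f u y) v

/-- Hessian determinant `f_uu · f_vv − f_uv²` of `f` at `(u, v)`. -/
noncomputable def hessDet (f : ℝ → ℝ → ℝ) (u v : ℝ) : ℝ :=
  pdu (pdu f) u v * pdv (pdv f) u v - pdv (pdu f) u v ^ 2

/-- Gaussian curvature of the graph surface `{(u, v, f u v)}` at `(u, v)`:
`K = (f_uu · f_vv − f_uv²) / (1 + f_u² + f_v²)²`. -/
noncomputable def gaussK (f : ℝ → ℝ → ℝ) (u v : ℝ) : ℝ :=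
  hessDet f u v / (1 + pdu f u v ^ 2 + pdv f u v ^ 2) ^ 2

/-- The 2-input Kadiyala production function
`P(u,v) = (k₁·u^(β₁+β₂) + 2k₂·u^β₁·v^β₂ + k₃·v^(β₁+β₂))^(δ/(β₁+β₂))`. -/
noncomputable def PKad (k₁ k₂ k₃ β₁ β₂ δ : ℝ) : ℝ → ℝ → ℝ := fun u v =>
  (k₁ * u ^ (β₁ + β₂) + 2 * k₂ * u ^ β₁ * v ^ β₂ + k₃ * v ^ (β₁ + β₂)) ^ (δ / (β₁ + β₂))

private lemma aux_gaussK_eq_zero_iff (f : ℝ → ℝ → ℝ) (u v : ℝ) :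
    gaussK f u v = 0 ↔ hessDet f u v = 0 := by
  unfold gaussK
  rw [div_eq_zero_iff]
  have h : ((1 : ℝ) + pdu f u v ^ 2 + pdv f u v ^ 2) ^ 2 ≠ 0 := by positivity
  tauto

private lemma hdA (k C s c : ℝ) (hC : 0 < C) (hk : 0 < k) {u : ℝ} (hu : 0 < u) :
    HasDerivAt (fun x : ℝ => (k * x ^ s + C) ^ c)
      (c * (k * u ^ s + C) ^ (c - 1) * (k * (s * u ^ (s - 1)))) u := by
  have hg : 0 < k * u ^ s + C := by positivity
  have h1 : HasDerivAt (fun x : ℝ => k * x ^ s + C) (k * (s * u ^ (s - 1))) u :=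
    ((Real.hasDerivAt_rpow_const (Or.inl hu.ne')).const_mul k).add_const C
  have h2 : HasDerivAt (fun y : ℝ => y ^ c) (c * (k * u ^ s + C) ^ (c - 1)) (k * u ^ s + C) :=
    Real.hasDerivAt_rpow_const (Or.inl hg.ne')
  exact h2.comp u h1

private lemma hdA' (k C s c : ℝ) (hC : 0 < C) (hk : 0 < k) {v : ℝ} (hv : 0 < v) :
    HasDerivAt (fun y : ℝ => (C + k * y ^ s) ^ c)
      (c * (C + k * v ^ s) ^ (c - 1) * (k * (s * v ^ (s - 1)))) v := by
  simpa [add_comm] using hdA k C s c hC hk hv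

private lemma hd_uu (k C s c : ℝ) (hC : 0 < C) (hk : 0 < k) {u : ℝ} (hu : 0 < u) :
    HasDerivAt (fun x : ℝ => c * (k * x ^ s + C) ^ (c - 1) * (k * (s * x ^ (s - 1))))
      (c * k * s * ((c - 1) * (k * u ^ s + C) ^ (c - 1 - 1) * (k * (s * u ^ (s - 1))) * u ^ (s - 1)
        + (k * u ^ s + C) ^ (c - 1) * ((s - 1) * u ^ (s - 1 - 1)))) u := by
  have h1 := hdA k C s (c - 1) hC hk hu
  have h2 : HasDerivAt (fun x : ℝ => x ^ (s - 1)) ((s - 1) * u ^ (s - 1 - 1)) u :=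
    Real.hasDerivAt_rpow_const (Or.inl hu.ne')
  have h3 := (h1.mul h2).const_mul (c * k * s)
  have heq : (fun x : ℝ => c * (k * x ^ s + C) ^ (c - 1) * (k * (s * x ^ (s - 1))))
      = fun x : ℝ => c * k * s * ((k * x ^ s + C) ^ (c - 1) * x ^ (s - 1)) := by
    funext x; ring
  rw [heq]
  exact h3

private lemma hd_vv (k C s c : ℝ) (hC : 0 < C) (hk : 0 < k) {v : ℝ} (hv : 0 < v) :
    HasDerivAt (fun y : ℝ => c * (C + k * y ^ s) ^ (c - 1) * (k * (s * y ^ (s - 1))))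
      (c * k * s * ((c - 1) * (C + k * v ^ s) ^ (c - 1 - 1) * (k * (s * v ^ (s - 1))) * v ^ (s - 1)
        + (C + k * v ^ s) ^ (c - 1) * ((s - 1) * v ^ (s - 1 - 1)))) v := by
  have h1 := hdA' k C s (c - 1) hC hk hv
  have h2 : HasDerivAt (fun y : ℝ => y ^ (s - 1)) ((s - 1) * v ^ (s - 1 - 1)) v :=
    Real.hasDerivAt_rpow_const (Or.inl hv.ne')
  have h3 := (h1.mul h2).const_mul (c * k * s)
  have heq : (fun y : ℝ => c * (C + k * y ^ s) ^ (c - 1) * (k * (s * y ^ (s - 1))))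
      = fun y : ℝ => c * k * s * ((C + k * y ^ s) ^ (c - 1) * y ^ (s - 1)) := by
    funext y; ring
  rw [heq]
  exact h3

private lemma hd_uv (k C s c K : ℝ) (hC : 0 < C) (hk : 0 < k) {v : ℝ} (hv : 0 < v) :
    HasDerivAt (fun y : ℝ => c * (C + k * y ^ s) ^ (c - 1) * K)
      (c * K * ((c - 1) * (C + k * v ^ s) ^ (c - 1 - 1) * (k * (s * v ^ (s - 1))))) v := by
  have h1 := hdA' k C s (c - 1) hC hk hv
  have h3 := h1.const_mul (c * K)
  have heq : (fun y : ℝ => c * (C + k * y ^ s) ^ (c - 1) * K)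
      = fun y : ℝ => c * K * ((C + k * y ^ s) ^ (c - 1)) := by funext y; ring
  rw [heq]
  convert h3 using 1

private lemma hess_formula (k₁ k₃ s c : ℝ) (hk₁ : 0 < k₁) (hk₃ : 0 < k₃)
    {u v : ℝ} (hu : 0 < u) (hv : 0 < v) :
    hessDet (fun u v => (k₁ * u ^ s + k₃ * v ^ s) ^ c) u v
      = c ^ 2 * k₁ * k₃ * s ^ 2 * (s - 1) * (c * s - 1)
        * ((k₁ * u ^ s + k₃ * v ^ s) ^ (c - 1) * (k₁ * u ^ s + k₃ * v ^ s) ^ (c - 1))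
        * u ^ (s - 1 - 1) * v ^ (s - 1 - 1) := by
  set F : ℝ → ℝ → ℝ := fun u v => (k₁ * u ^ s + k₃ * v ^ s) ^ c with hF
  have hg : 0 < k₁ * u ^ s + k₃ * v ^ s := by positivity
  -- first partial derivatives (as functions, on the open quadrant)
  have hpdu : ∀ x y : ℝ, 0 < x → 0 < y →
      pdu F x y = c * (k₁ * x ^ s + k₃ * y ^ s) ^ (c - 1) * (k₁ * (s * x ^ (s - 1))) := by
    intro x y hx hy
    have hC : 0 < k₃ * y ^ s := by positivity
    exact (hdA k₁ (k₃ * y ^ s) s c hC hk₁ hx).deriv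
  have hpdv : ∀ x y : ℝ, 0 < x → 0 < y →
      pdv F x y = c * (k₁ * x ^ s + k₃ * y ^ s) ^ (c - 1) * (k₃ * (s * y ^ (s - 1))) := by
    intro x y hx hy
    have hC : 0 < k₁ * x ^ s := by positivity
    exact (hdA' k₃ (k₁ * x ^ s) s c hC hk₃ hy).deriv
  -- second partials
  have h_uu : pdu (pdu F) u v
      = c * k₁ * s * ((c - 1) * (k₁ * u ^ s + k₃ * v ^ s) ^ (c - 1 - 1)
          * (k₁ * (s * u ^ (s - 1))) * u ^ (s - 1)
        + (k₁ * u ^ s + k₃ * v ^ s) ^ (c - 1) * ((s - 1) * u ^ (s - 1 - 1))) := by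
    have hev : (fun x => pdu F x v)
        =ᶠ[nhds u] (fun x => c * (k₁ * x ^ s + k₃ * v ^ s) ^ (c - 1) * (k₁ * (s * x ^ (s - 1)))) := by
      filter_upwards [Ioi_mem_nhds hu] with x hx
      exact hpdu x v hx hv
    show deriv (fun x => pdu F x v) u = _
    rw [hev.deriv_eq]
    exact (hd_uu k₁ (k₃ * v ^ s) s c (by positivity) hk₁ hu).deriv
  have h_vv : pdv (pdv F) u v
      = c * k₃ * s * ((c - 1) * (k₁ * u ^ s + k₃ * v ^ s) ^ (c - 1 - 1)
          * (k₃ * (s * v ^ (s - 1))) * v ^ (s - 1)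
        + (k₁ * u ^ s + k₃ * v ^ s) ^ (c - 1) * ((s - 1) * v ^ (s - 1 - 1))) := by
    have hev : (fun y => pdv F u y)
        =ᶠ[nhds v] (fun y => c * (k₁ * u ^ s + k₃ * y ^ s) ^ (c - 1) * (k₃ * (s * y ^ (s - 1)))) := by
      filter_upwards [Ioi_mem_nhds hv] with y hy
      exact hpdv u y hu hy
    show deriv (fun y => pdv F u y) v = _
    rw [hev.deriv_eq]
    exact (hd_vv k₃ (k₁ * u ^ s) s c (by positivity) hk₃ hv).deriv
  have h_uv : pdv (pdu F) u v
      = c * (k₁ * (s * u ^ (s - 1))) * ((c - 1) * (k₁ * u ^ s + k₃ * v ^ s) ^ (c - 1 - 1)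
          * (k₃ * (s * v ^ (s - 1)))) := by
    have hev : (fun y => pdu F u y)
        =ᶠ[nhds v] (fun y => c * (k₁ * u ^ s + k₃ * y ^ s) ^ (c - 1) * (k₁ * (s * u ^ (s - 1)))) := by
      filter_upwards [Ioi_mem_nhds hv] with y hy
      exact hpdu u y hu hy
    show deriv (fun y => pdu F u y) v = _
    rw [hev.deriv_eq]
    exact (hd_uv k₃ (k₁ * u ^ s) s c (k₁ * (s * u ^ (s - 1))) (by positivity) hk₃ hv).deriv
  -- algebra
  have hAA : u ^ (s - 1) * u ^ (s - 1) = u ^ (s - 1 - 1) * u ^ s := by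
    rw [← Real.rpow_add hu, ← Real.rpow_add hu]; congr 1; ring
  have hBB : v ^ (s - 1) * v ^ (s - 1) = v ^ (s - 1 - 1) * v ^ s := by
    rw [← Real.rpow_add hv, ← Real.rpow_add hv]; congr 1; ring
  have hG : (k₁ * u ^ s + k₃ * v ^ s) ^ (c - 1 - 1) * (k₁ * u ^ s + k₃ * v ^ s)
      = (k₁ * u ^ s + k₃ * v ^ s) ^ (c - 1) := by
    rw [← Real.rpow_add_one hg.ne' (c - 1 - 1)]; congr 1; ring
  rw [hessDet, h_uu, h_vv, h_uv]
  set G1 := (k₁ * u ^ s + k₃ * v ^ s) ^ (c - 1) with hG1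
  set G2 := (k₁ * u ^ s + k₃ * v ^ s) ^ (c - 1 - 1) with hG2
  linear_combination
    (c ^ 2 * k₁ * k₃ * s ^ 2 * (s - 1) * (c - 1) * s * G1 * G2 * k₁ * v ^ (s - 1 - 1)) * hAA
    + (c ^ 2 * k₁ * k₃ * s ^ 2 * (s - 1) * (c - 1) * s * G1 * G2 * k₃ * u ^ (s - 1 - 1)) * hBB
    + (c ^ 2 * k₁ * k₃ * s ^ 2 * (s - 1) * (c - 1) * s * G1 * u ^ (s - 1 - 1) * v ^ (s - 1 - 1)) * hG

/-- In the CES case `k₂ = 0` with `δ ≠ 1`, the Kadiyala surface is developable (its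
Gaussian curvature vanishes at every point of `(0,∞)²`) if and only if `β₁ + β₂ = 1`. -/
theorem kadiyala_ces_developable_iff
    (k₁ k₂ k₃ β₁ β₂ δ : ℝ)
    (hsum : k₁ + 2 * k₂ + k₃ = 1) (hk₁ : 0 ≤ k₁) (hk₂ : 0 ≤ k₂) (hk₃ : 0 ≤ k₃)
    (h12 : ¬(k₁ = 0 ∧ k₂ = 0)) (h23 : ¬(k₂ = 0 ∧ k₃ = 0))
    (hβ₁ : 0 < β₁ * (β₁ + β₂)) (hβ₂ : 0 < β₂ * (β₁ + β₂)) (hδ : 0 < δ) (hk2 : k₂ = 0) (hδ1 : δ ≠ 1) :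
    (∀ u v : ℝ, 0 < u → 0 < v → gaussK (PKad k₁ k₂ k₃ β₁ β₂ δ) u v = 0) ↔
      β₁ + β₂ = 1 := by
  subst hk2
  have hk₁p : 0 < k₁ := lt_of_le_of_ne hk₁ fun h => h12 ⟨h.symm, rfl⟩
  have hk₃p : 0 < k₃ := lt_of_le_of_ne hk₃ fun h => h23 ⟨rfl, h.symm⟩
  set s := β₁ + β₂ with hs_def
  have hs : s ≠ 0 := by
    intro h
    rw [h, mul_zero] at hβ₁
    exact lt_irrefl 0 hβ₁
  set c := δ / s with hc_def
  have hcs : c * s = δ := div_mul_cancel₀ δ hs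
  have hcne : c ≠ 0 := div_ne_zero hδ.ne' hs
  have hP : PKad k₁ 0 k₃ β₁ β₂ δ = fun u v => (k₁ * u ^ s + k₃ * v ^ s) ^ c := by
    funext u v
    simp [PKad, hs_def, hc_def]
  rw [hP]
  have hδ1' : c * s - 1 ≠ 0 := by rw [hcs]; exact sub_ne_zero.mpr hδ1
  constructor
  · intro h
    have h11 := (aux_gaussK_eq_zero_iff _ 1 1).mp (h 1 1 one_pos one_pos)
    rw [hess_formula k₁ k₃ s c hk₁p hk₃p one_pos one_pos] at h11
    by_contra hne
    have hs1 : s - 1 ≠ 0 := sub_ne_zero.mpr hne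
    have hgpos : (0:ℝ) < k₁ * (1:ℝ) ^ s + k₃ * (1:ℝ) ^ s := by positivity
    have hGne : (k₁ * (1:ℝ) ^ s + k₃ * (1:ℝ) ^ s) ^ (c - 1)
        * (k₁ * (1:ℝ) ^ s + k₃ * (1:ℝ) ^ s) ^ (c - 1) ≠ 0 := by positivity
    have hOne : ((1:ℝ)) ^ (s - 1 - 1) ≠ 0 := by positivity
    exact (mul_ne_zero (mul_ne_zero (mul_ne_zero (mul_ne_zero (mul_ne_zero (mul_ne_zero
      (mul_ne_zero (mul_ne_zero (pow_ne_zero 2 hcne) hk₁p.ne') hk₃p.ne')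
      (pow_ne_zero 2 hs)) hs1) hδ1') hGne) hOne) hOne) h11
  · intro h1 u v hu hv
    rw [aux_gaussK_eq_zero_iff, hess_formula k₁ k₃ s c hk₁p hk₃p hu hv, h1]
    ring
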